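/- If M ∈ H and δ, δ′ ∈ Δ₂ satisfy Mδ = δ′ (as column vectors), then δ = δ′, and either M is the identity matrix, or δ ∈ {(1,0,1),(−1,0,−1)} and M = J. -/

import Mathlib

open Matrix

def Bmat : Matrix (Fin 3) (Fin 3) ℤ := !![3, 4, 0; 2, 3, 0; 0, 0, 1]
def Jmat : Matrix (Fin 3) (Fin 3) ℤ := !![0, 0, 1; 0, 1, 0; 1, 0, 0]

def BGL : GL (Fin 3) ℤ :=
  ⟨Bmat, !![3, -4, 0; -2, 3, 0; 0, 0, 1], by decide, by decide⟩

def JGL : GL (Fin 3) ℤ := ⟨Jmat, Jmat, by decide, by decide⟩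

def H : Subgroup (GL (Fin 3) ℤ) := Subgroup.closure {BGL, JGL}

def Delta2 : Set (Fin 3 → ℤ) :=
  {![2, 1, 0], ![-2, 1, 0], ![1, 0, 1], ![-1, 0, 1], ![-1, 0, -1]}

namespace Unic


def Bimat : Matrix (Fin 3) (Fin 3) ℤ := !![3, -4, 0; -2, 3, 0; 0, 0, 1]

lemma Bmul (v : Fin 3 → ℤ) : Bmat.mulVec v = ![3*v 0+4*v 1, 2*v 0+3*v 1, v 2] := by
  funext i; fin_cases i <;>
    simp [Bmat, mulVec, dotProduct, Fin.sum_univ_three] <;> ring_nf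

lemma Bimul (v : Fin 3 → ℤ) : Bimat.mulVec v = ![3*v 0-4*v 1, -2*v 0+3*v 1, v 2] := by
  funext i; fin_cases i <;>
    simp [Bimat, mulVec, dotProduct, Fin.sum_univ_three] <;> ring_nf

lemma Jmul (v : Fin 3 → ℤ) : Jmat.mulVec v = ![v 2, v 1, v 0] := by
  funext i; fin_cases i <;>
    simp [Jmat, mulVec, dotProduct, Fin.sum_univ_three] <;> ring_nf

lemma JJ (v : Fin 3 → ℤ) : Jmat.mulVec (Jmat.mulVec v) = v := by
  rw [Jmul, Jmul]; funext i; fin_cases i <;> simp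

/-- The quadratic form invariant. -/
def q2 (v : Fin 3 → ℤ) : Prop := v 0^2 - 2*(v 1)^2 + v 2^2 = 2

/-- Region reached after applying B. -/
def Rp (v : Fin 3 → ℤ) : Prop :=
  q2 v ∧ ((1 ≤ v 1 ∧ v 1 + 1 ≤ v 0) ∨ (v 1 ≤ -1 ∧ v 0 ≤ v 1 - 1)) ∧ v ≠ ![2,1,0]

/-- Region reached after applying B⁻¹. -/
def Rm (v : Fin 3 → ℤ) : Prop :=
  q2 v ∧ ((1 ≤ v 1 ∧ v 0 ≤ -(v 1) - 1) ∨ (v 1 ≤ -1 ∧ -(v 1) + 1 ≤ v 0)) ∧ v ≠ ![-2,1,0]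

lemma ne_vec (v w : Fin 3 → ℤ) (h : v 1 ≠ w 1) : v ≠ w := fun e => h (by rw [e])

lemma T1 {v : Fin 3 → ℤ} (h : Rp v) : Rp (Bmat.mulVec v) := by
  obtain ⟨hq, hb, -⟩ := h
  rw [Bmul]
  refine ⟨?_, ?_, ?_⟩
  · simp only [q2] at hq ⊢; simp; ring_nf; ring_nf at hq; linarith
  · simp; rcases hb with ⟨h1, h2⟩ | ⟨h1, h2⟩
    · left; constructor <;> linarith
    · right; constructor <;> linarith
  · apply ne_vec; simp
    rcases hb with ⟨h1, h2⟩ | ⟨h1, h2⟩ <;> intro e <;> linarith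

lemma T2 {v : Fin 3 → ℤ} (h : Rm v) : Rm (Bimat.mulVec v) := by
  obtain ⟨hq, hb, -⟩ := h
  rw [Bimul]
  refine ⟨?_, ?_, ?_⟩
  · simp only [q2] at hq ⊢; simp; ring_nf; ring_nf at hq; linarith
  · simp; rcases hb with ⟨h1, h2⟩ | ⟨h1, h2⟩
    · left; constructor <;> linarith
    · right; constructor <;> linarith
  · apply ne_vec; simp
    rcases hb with ⟨h1, h2⟩ | ⟨h1, h2⟩ <;> intro e <;> linarith

lemma zbound {v : Fin 3 → ℤ} (hq : q2 v)
    (hb : (1 ≤ v 1 ∧ v 1 + 1 ≤ v 0) ∨ (v 1 ≤ -1 ∧ v 0 ≤ v 1 - 1)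
        ∨ (1 ≤ v 1 ∧ v 0 ≤ -(v 1) - 1) ∨ (v 1 ≤ -1 ∧ -(v 1) + 1 ≤ v 0)) :
    v 2 ≤ |v 1| - 1 ∧ -(|v 1| - 1) ≤ v 2 := by
  simp only [q2] at hq
  have h1 : 1 ≤ |v 1| := by
    rcases hb with ⟨h,_⟩|⟨h,_⟩|⟨h,_⟩|⟨h,_⟩ <;> cases abs_cases (v 1) <;> omega
  have hx : (|v 1| + 1) ≤ |v 0| := by
    rcases hb with ⟨h,h2⟩|⟨h,h2⟩|⟨h,h2⟩|⟨h,h2⟩ <;>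
      cases abs_cases (v 1) <;> cases abs_cases (v 0) <;> omega
  have hx2 : (|v 1| + 1)^2 ≤ (v 0)^2 := by
    have := sq_abs (v 0); nlinarith [abs_nonneg (v 0), abs_nonneg (v 1)]
  have hz : (v 2)^2 ≤ (|v 1| - 1)^2 := by
    have := sq_abs (v 1); nlinarith
  constructor <;> nlinarith [sq_nonneg (v 2 - (|v 1| - 1)), sq_nonneg (v 2 + (|v 1| - 1))]

lemma T3 {v : Fin 3 → ℤ} (h : Rp v) : Rp (Bmat.mulVec (Jmat.mulVec v)) := by
  obtain ⟨hq, hb, -⟩ := h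
  obtain ⟨hz1, hz2⟩ := zbound hq (by tauto)
  rw [Jmul, Bmul]
  simp only [q2] at hq
  refine ⟨?_, ?_, ?_⟩
  · simp only [q2]; simp; ring_nf; ring_nf at hq; linarith
  · simp
    rcases hb with ⟨h1, h2⟩ | ⟨h1, h2⟩
    · rw [abs_of_nonneg (by linarith : (0:ℤ) ≤ v 1)] at hz1 hz2
      left; constructor <;> linarith
    · rw [abs_of_nonpos (by linarith : v 1 ≤ (0:ℤ))] at hz1 hz2
      right; constructor <;> linarith
  · apply ne_vec; simp
    rcases hb with ⟨h1, h2⟩ | ⟨h1, h2⟩ <;> intro e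
    · rw [abs_of_nonneg (by linarith : (0:ℤ) ≤ v 1)] at hz1 hz2; linarith
    · rw [abs_of_nonpos (by linarith : v 1 ≤ (0:ℤ))] at hz1 hz2; linarith

lemma T4 {v : Fin 3 → ℤ} (h : Rp v) : Rm (Bimat.mulVec (Jmat.mulVec v)) := by
  obtain ⟨hq, hb, -⟩ := h
  obtain ⟨hz1, hz2⟩ := zbound hq (by tauto)
  rw [Jmul, Bimul]
  simp only [q2] at hq
  refine ⟨?_, ?_, ?_⟩
  · simp only [q2]; simp; ring_nf; ring_nf at hq; linarith
  · simp
    rcases hb with ⟨h1, h2⟩ | ⟨h1, h2⟩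
    · rw [abs_of_nonneg (by linarith : (0:ℤ) ≤ v 1)] at hz1 hz2
      left; constructor <;> linarith
    · rw [abs_of_nonpos (by linarith : v 1 ≤ (0:ℤ))] at hz1 hz2
      right; constructor <;> linarith
  · apply ne_vec; simp
    rcases hb with ⟨h1, h2⟩ | ⟨h1, h2⟩ <;> intro e
    · rw [abs_of_nonneg (by linarith : (0:ℤ) ≤ v 1)] at hz1 hz2; linarith
    · rw [abs_of_nonpos (by linarith : v 1 ≤ (0:ℤ))] at hz1 hz2; linarith

lemma T5 {v : Fin 3 → ℤ} (h : Rm v) : Rp (Bmat.mulVec (Jmat.mulVec v)) := by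
  obtain ⟨hq, hb, -⟩ := h
  obtain ⟨hz1, hz2⟩ := zbound hq (by tauto)
  rw [Jmul, Bmul]
  simp only [q2] at hq
  refine ⟨?_, ?_, ?_⟩
  · simp only [q2]; simp; ring_nf; ring_nf at hq; linarith
  · simp
    rcases hb with ⟨h1, h2⟩ | ⟨h1, h2⟩
    · rw [abs_of_nonneg (by linarith : (0:ℤ) ≤ v 1)] at hz1 hz2
      left; constructor <;> linarith
    · rw [abs_of_nonpos (by linarith : v 1 ≤ (0:ℤ))] at hz1 hz2
      right; constructor <;> linarith
  · apply ne_vec; simp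
    rcases hb with ⟨h1, h2⟩ | ⟨h1, h2⟩ <;> intro e
    · rw [abs_of_nonneg (by linarith : (0:ℤ) ≤ v 1)] at hz1 hz2; linarith
    · rw [abs_of_nonpos (by linarith : v 1 ≤ (0:ℤ))] at hz1 hz2; linarith

lemma T6 {v : Fin 3 → ℤ} (h : Rm v) : Rm (Bimat.mulVec (Jmat.mulVec v)) := by
  obtain ⟨hq, hb, -⟩ := h
  obtain ⟨hz1, hz2⟩ := zbound hq (by tauto)
  rw [Jmul, Bimul]
  simp only [q2] at hq
  refine ⟨?_, ?_, ?_⟩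
  · simp only [q2]; simp; ring_nf; ring_nf at hq; linarith
  · simp
    rcases hb with ⟨h1, h2⟩ | ⟨h1, h2⟩
    · rw [abs_of_nonneg (by linarith : (0:ℤ) ≤ v 1)] at hz1 hz2
      left; constructor <;> linarith
    · rw [abs_of_nonpos (by linarith : v 1 ≤ (0:ℤ))] at hz1 hz2
      right; constructor <;> linarith
  · apply ne_vec; simp
    rcases hb with ⟨h1, h2⟩ | ⟨h1, h2⟩ <;> intro e
    · rw [abs_of_nonneg (by linarith : (0:ℤ) ≤ v 1)] at hz1 hz2; linarith
    · rw [abs_of_nonpos (by linarith : v 1 ≤ (0:ℤ))] at hz1 hz2; linarith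







-- letters
inductive Letter | b | bi | j
deriving DecidableEq

def gl : Letter → GL (Fin 3) ℤ
  | .b => BGL
  | .bi => BGL⁻¹
  | .j => JGL

def glm : Letter → Matrix (Fin 3) (Fin 3) ℤ
  | .b => Bmat
  | .bi => Bimat
  | .j => Jmat

lemma gl_val (a : Letter) : (gl a : Matrix (Fin 3) (Fin 3) ℤ) = glm a := by
  cases a <;> rfl

def myProd : List Letter → GL (Fin 3) ℤ
  | [] => 1
  | a :: t => myProd t * gl a

def cancels : Letter → Letter → Prop
  | .b, .bi => True
  | .bi, .b => True
  | .j, .j => True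
  | _, _ => False

instance : DecidableRel cancels := fun a b => by
  cases a <;> cases b <;> simp [cancels] <;> infer_instance

lemma gl_cancel {a c : Letter} (h : cancels a c) : gl c * gl a = 1 := by
  cases a <;> cases c <;> simp_all [cancels, gl]
  exact Units.ext (by decide)

def Red (l : List Letter) : Prop := l.Chain' (fun a c => ¬ cancels a c)

def normAux (a : Letter) : List Letter → List Letter
  | [] => [a]
  | h :: t => if cancels a h then t else a :: h :: t

def norm (l : List Letter) : List Letter := l.foldr normAux []

lemma red_normAux {a : Letter} {r : List Letter} (h : Red r) : Red (normAux a r) := by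
  cases r with
  | nil => simp [normAux, Red, List.Chain']
  | cons c t =>
    by_cases hc : cancels a c
    · simpa [normAux, hc, Red, List.Chain'] using h.tail
    · simp only [normAux, if_neg hc]
      exact List.isChain_cons_cons.mpr ⟨hc, h⟩

lemma prod_normAux {a : Letter} {r : List Letter} : myProd (normAux a r) = myProd r * gl a := by
  cases r with
  | nil => simp [normAux, myProd]
  | cons c t =>
    by_cases hc : cancels a c
    · simp only [normAux, if_pos hc, myProd, mul_assoc, gl_cancel hc, mul_one]
    · simp [normAux, if_neg hc, myProd]

lemma red_norm (l : List Letter) : Red (norm l) := by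
  induction l with
  | nil => simp [norm, Red, List.Chain']
  | cons a t ih => exact red_normAux ih

lemma prod_norm (l : List Letter) : myProd (norm l) = myProd l := by
  induction l with
  | nil => rfl
  | cons a t ih => simp [norm, List.foldr, myProd, ← ih]; exact prod_normAux



def Final (v : Fin 3 → ℤ) : Prop :=
  Rp v ∨ Rm v ∨ Rp (Jmat.mulVec v) ∨ Rm (Jmat.mulVec v)


instance : DecidablePred q2 := fun v => by unfold q2; infer_instance
instance : DecidablePred Rp := fun v => by unfold Rp; infer_instance
instance : DecidablePred Rm := fun v => by unfold Rm; infer_instance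
instance : DecidablePred Final := fun v => by unfold Final; infer_instance

lemma final_not_delta {v : Fin 3 → ℤ} (hf : Final v) : v ∉ Delta2 := by
  intro hd
  simp only [Delta2, Set.mem_insert_iff, Set.mem_singleton_iff] at hd
  rcases hd with rfl | rfl | rfl | rfl | rfl <;> revert hf <;> decide

lemma seedP {δ : Fin 3 → ℤ} (h : δ ∈ Delta2) : Rp (Bmat.mulVec δ) := by
  simp only [Delta2, Set.mem_insert_iff, Set.mem_singleton_iff] at h
  rcases h with rfl | rfl | rfl | rfl | rfl <;> decide

lemma seedM {δ : Fin 3 → ℤ} (h : δ ∈ Delta2) : Rm (Bimat.mulVec δ) := by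
  simp only [Delta2, Set.mem_insert_iff, Set.mem_singleton_iff] at h
  rcases h with rfl | rfl | rfl | rfl | rfl <;> decide

lemma seedJP {δ : Fin 3 → ℤ} (h : δ ∈ Delta2) : Rp (Bmat.mulVec (Jmat.mulVec δ)) := by
  simp only [Delta2, Set.mem_insert_iff, Set.mem_singleton_iff] at h
  rcases h with rfl | rfl | rfl | rfl | rfl <;> decide

lemma seedJM {δ : Fin 3 → ℤ} (h : δ ∈ Delta2) : Rm (Bimat.mulVec (Jmat.mulVec δ)) := by
  simp only [Delta2, Set.mem_insert_iff, Set.mem_singleton_iff] at h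
  rcases h with rfl | rfl | rfl | rfl | rfl <;> decide

lemma seedJ {δ : Fin 3 → ℤ} (h : δ ∈ Delta2) (h2 : Jmat.mulVec δ ∈ Delta2) :
    (δ = ![1,0,1] ∨ δ = ![-1,0,-1]) ∧ Jmat.mulVec δ = δ := by
  simp only [Delta2, Set.mem_insert_iff, Set.mem_singleton_iff] at h h2
  rcases h with rfl | rfl | rfl | rfl | rfl <;> revert h2 <;> decide



lemma prod_cons_mulVec (a : Letter) (t : List Letter) (v : Fin 3 → ℤ) :
    (myProd (a :: t) : Matrix (Fin 3) (Fin 3) ℤ).mulVec v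
      = (myProd t : Matrix (Fin 3) (Fin 3) ℤ).mulVec ((glm a).mulVec v) := by
  show ((myProd t * gl a : GL (Fin 3) ℤ) : Matrix (Fin 3) (Fin 3) ℤ).mulVec v = _
  rw [Units.val_mul, ← mulVec_mulVec, gl_val]

lemma esc : ∀ (l : List Letter), Red l → ∀ v : Fin 3 → ℤ,
    ((Rp v ∧ l.head? ≠ some .bi) ∨ (Rm v ∧ l.head? ≠ some .b)
     ∨ (Rp (Jmat.mulVec v) ∧ l.head? ≠ some .j)
     ∨ (Rm (Jmat.mulVec v) ∧ l.head? ≠ some .j)) →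
    Final ((myProd l : Matrix (Fin 3) (Fin 3) ℤ).mulVec v) := by
  intro l
  induction l with
  | nil =>
    intro _ v hs
    have hv : (myProd ([] : List Letter) : Matrix (Fin 3) (Fin 3) ℤ).mulVec v = v := by
      show ((1 : GL (Fin 3) ℤ) : Matrix (Fin 3) (Fin 3) ℤ).mulVec v = v
      simp
    rw [hv]
    rcases hs with ⟨h,_⟩|⟨h,_⟩|⟨h,_⟩|⟨h,_⟩
    · exact Or.inl h
    · exact Or.inr (Or.inl h)
    · exact Or.inr (Or.inr (Or.inl h))
    · exact Or.inr (Or.inr (Or.inr h))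
  | cons a t ih =>
    intro hred v hs
    have hred' : Red t := (List.isChain_cons.mp hred).2
    have hhead : ∀ c ∈ t.head?, ¬ cancels a c := (List.isChain_cons.mp hred).1
    rw [prod_cons_mulVec]
    cases a with
    | b =>
      have hnb : t.head? ≠ some .bi := by
        intro e; exact hhead .bi (by rw [e]; rfl) trivial
      rcases hs with ⟨hv,-⟩|⟨-,hne⟩|⟨hv,-⟩|⟨hv,-⟩
      · exact ih hred' _ (Or.inl ⟨T1 hv, hnb⟩)
      · exact absurd rfl hne
      · have := T3 hv; rw [JJ] at this
        exact ih hred' _ (Or.inl ⟨this, hnb⟩)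
      · have := T5 hv; rw [JJ] at this
        exact ih hred' _ (Or.inl ⟨this, hnb⟩)
    | bi =>
      have hnb : t.head? ≠ some .b := by
        intro e; exact hhead .b (by rw [e]; rfl) trivial
      rcases hs with ⟨-,hne⟩|⟨hv,-⟩|⟨hv,-⟩|⟨hv,-⟩
      · exact absurd rfl hne
      · exact ih hred' _ (Or.inr (Or.inl ⟨T2 hv, hnb⟩))
      · have := T4 hv; rw [JJ] at this
        exact ih hred' _ (Or.inr (Or.inl ⟨this, hnb⟩))
      · have := T6 hv; rw [JJ] at this
        exact ih hred' _ (Or.inr (Or.inl ⟨this, hnb⟩))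
    | j =>
      have hnj : t.head? ≠ some .j := by
        intro e; exact hhead .j (by rw [e]; rfl) trivial
      rcases hs with ⟨hv,-⟩|⟨hv,-⟩|⟨hv,hne⟩|⟨hv,hne⟩
      · refine ih hred' _ (Or.inr (Or.inr (Or.inl ⟨?_, hnj⟩)))
        show Rp (Jmat.mulVec ((glm .j).mulVec v))
        rw [show glm .j = Jmat from rfl, JJ]; exact hv
      · refine ih hred' _ (Or.inr (Or.inr (Or.inr ⟨?_, hnj⟩)))
        show Rm (Jmat.mulVec ((glm .j).mulVec v))
        rw [show glm .j = Jmat from rfl, JJ]; exact hv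
      · exact absurd rfl hne
      · exact absurd rfl hne

lemma main_list (l : List Letter) (hred : Red l) (δ : Fin 3 → ℤ) (hδ : δ ∈ Delta2)
    (hin : (myProd l : Matrix (Fin 3) (Fin 3) ℤ).mulVec δ ∈ Delta2) :
    l = [] ∨ (l = [.j] ∧ (δ = ![1,0,1] ∨ δ = ![-1,0,-1])) := by
  match l with
  | [] => exact Or.inl rfl
  | .b :: t =>
    exfalso
    rw [prod_cons_mulVec] at hin
    have hnb : t.head? ≠ some Letter.bi := by
      intro e; exact (List.isChain_cons.mp hred).1 .bi (by rw [e]; rfl) trivial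
    exact final_not_delta
      (esc t (List.isChain_cons.mp hred).2 _ (Or.inl ⟨seedP hδ, hnb⟩)) hin
  | .bi :: t =>
    exfalso
    rw [prod_cons_mulVec] at hin
    have hnb : t.head? ≠ some Letter.b := by
      intro e; exact (List.isChain_cons.mp hred).1 .b (by rw [e]; rfl) trivial
    exact final_not_delta
      (esc t (List.isChain_cons.mp hred).2 _ (Or.inr (Or.inl ⟨seedM hδ, hnb⟩))) hin
  | [.j] =>
    rw [prod_cons_mulVec] at hin
    have h1 : (myProd ([] : List Letter) : Matrix (Fin 3) (Fin 3) ℤ).mulVec ((glm .j).mulVec δ)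
        = Jmat.mulVec δ := by
      show ((1 : GL (Fin 3) ℤ) : Matrix (Fin 3) (Fin 3) ℤ).mulVec _ = _
      simp [glm]
    rw [h1] at hin
    exact Or.inr ⟨rfl, (seedJ hδ hin).1⟩
  | .j :: .j :: t =>
    exact absurd trivial ((List.isChain_cons_cons.mp hred).1)
  | .j :: .b :: t =>
    exfalso
    rw [prod_cons_mulVec, prod_cons_mulVec] at hin
    have hred2 := (List.isChain_cons.mp hred).2
    have hnb : t.head? ≠ some Letter.bi := by
      intro e; exact (List.isChain_cons.mp hred2).1 .bi (by rw [e]; rfl) trivial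
    have hseed : Rp ((glm .b).mulVec ((glm .j).mulVec δ)) := seedJP hδ
    exact final_not_delta
      (esc t (List.isChain_cons.mp hred2).2 _ (Or.inl ⟨hseed, hnb⟩)) hin
  | .j :: .bi :: t =>
    exfalso
    rw [prod_cons_mulVec, prod_cons_mulVec] at hin
    have hred2 := (List.isChain_cons.mp hred).2
    have hnb : t.head? ≠ some Letter.b := by
      intro e; exact (List.isChain_cons.mp hred2).1 .b (by rw [e]; rfl) trivial
    have hseed : Rm ((glm .bi).mulVec ((glm .j).mulVec δ)) := seedJM hδ
    exact final_not_delta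
      (esc t (List.isChain_cons.mp hred2).2 _ (Or.inr (Or.inl ⟨hseed, hnb⟩))) hin


end Unic

namespace Unic

lemma JGL_inv : JGL⁻¹ = JGL := by
  have h : JGL * JGL = 1 := Units.ext (by decide)
  exact inv_eq_of_mul_eq_one_right h

lemma myProd_append_single (l : List Letter) (a : Letter) :
    myProd (l ++ [a]) = gl a * myProd l := by
  induction l with
  | nil => show myProd [] * gl a = gl a * myProd []; simp [myProd]
  | cons c t ih =>
    show myProd (t ++ [a]) * gl c = gl a * (myProd t * gl c)
    rw [ih, mul_assoc]

lemma exists_letters : ∀ (L : List (GL (Fin 3) ℤ)),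
    (∀ y ∈ L, y ∈ ({BGL, JGL} : Set (GL (Fin 3) ℤ)) ∪ ({BGL, JGL} : Set (GL (Fin 3) ℤ))⁻¹) →
    ∃ l : List Letter, myProd l = L.prod := by
  intro L
  induction L with
  | nil => exact fun _ => ⟨[], rfl⟩
  | cons x T ih =>
    intro hmem
    obtain ⟨l, hl⟩ := ih (fun y hy => hmem y (List.mem_cons_of_mem _ hy))
    have hx := hmem x List.mem_cons_self
    have hx' : x = BGL ∨ x = JGL ∨ x = BGL⁻¹ := by
      rcases hx with hx | hx
      · rcases hx with rfl | rfl
        · exact Or.inl rfl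
        · exact Or.inr (Or.inl rfl)
      · rw [Set.mem_inv] at hx
        rcases hx with h1 | h1
        · exact Or.inr (Or.inr (by rw [← inv_inv x, h1]))
        · refine Or.inr (Or.inl ?_)
          rw [← inv_inv x, h1, JGL_inv]
    rw [List.prod_cons]
    rcases hx' with rfl | rfl | rfl
    · exact ⟨l ++ [.b], by rw [myProd_append_single, hl]; rfl⟩
    · exact ⟨l ++ [.j], by rw [myProd_append_single, hl]; rfl⟩
    · exact ⟨l ++ [.bi], by rw [myProd_append_single, hl]; rfl⟩

end Unic

/-- If `M ∈ H` and `δ, δ' ∈ Δ₂` satisfy `M δ = δ'`, then `δ = δ'`, and either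
`M = I`, or `δ ∈ {(1,0,1), (-1,0,-1)}` and `M = J`. -/
theorem unicity_delta2 (M : GL (Fin 3) ℤ) (hM : M ∈ H) (δ δ' : Fin 3 → ℤ)
    (hδ : δ ∈ Delta2) (hδ' : δ' ∈ Delta2)
    (h : (M : Matrix (Fin 3) (Fin 3) ℤ).mulVec δ = δ') :
    δ = δ' ∧ (M = 1 ∨
      (δ ∈ ({![1, 0, 1], ![-1, 0, -1]} : Set (Fin 3 → ℤ)) ∧ M = JGL)) := by
  have hM' : M ∈ Submonoid.closure
      (({BGL, JGL} : Set (GL (Fin 3) ℤ)) ∪ ({BGL, JGL} : Set (GL (Fin 3) ℤ))⁻¹) := by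
    rw [← Subgroup.closure_toSubmonoid]; exact hM
  obtain ⟨L, hL, hLp⟩ := Submonoid.exists_list_of_mem_closure hM'
  obtain ⟨l0, hl0⟩ := Unic.exists_letters L hL
  have hp : Unic.myProd (Unic.norm l0) = M := by rw [Unic.prod_norm, hl0, hLp]
  have hin : (Unic.myProd (Unic.norm l0) : Matrix (Fin 3) (Fin 3) ℤ).mulVec δ ∈ Delta2 := by
    rw [hp, h]; exact hδ'
  rcases Unic.main_list (Unic.norm l0) (Unic.red_norm l0) δ hδ hin with he | ⟨he, hmem⟩
  · have hM1 : M = 1 := by rw [← hp, he]; rfl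
    have hδδ : δ' = δ := by
      rw [← h, hM1]
      show ((1 : GL (Fin 3) ℤ) : Matrix (Fin 3) (Fin 3) ℤ).mulVec δ = δ
      simp
    exact ⟨hδδ.symm, Or.inl hM1⟩
  · have hMJ : M = JGL := by
      rw [← hp, he]
      show (1 : GL (Fin 3) ℤ) * JGL = JGL
      rw [one_mul]
    have hfix : Jmat.mulVec δ = δ := by rcases hmem with rfl | rfl <;> decide
    have hδδ : δ = δ' := by rw [← h, hMJ]; exact hfix.symm
    refine ⟨hδδ, Or.inr ⟨?_, hMJ⟩⟩
    rcases hmem with rfl | rfl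
    · exact Set.mem_insert _ _
    · exact Set.mem_insert_iff.mpr (Or.inr rfl)
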